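/- arXiv:2509.21416 — 4 statements merged into one kernel-verified Lean document; each statement's English description precedes it below -/
import Mathlib

section
/- Let g, ρ, γ be real numbers with 0 < g ≤ ρ < γ ≤ 1, and let z be a complex number with |z| = 1. Then γ · |γz − g²| > ρ · g · |γz − 1|. -/
theorem spr_key_inequality (g ρ γ : ℝ) (hg : 0 < g) (hgρ : g ≤ ρ) (hργ : ρ < γ)
    (hγ : γ ≤ 1) (z : ℂ) (hz : ‖z‖ = 1) :
    ρ * g * ‖(γ : ℂ) * z - 1‖ < γ * ‖(γ : ℂ) * z - (g : ℂ) ^ 2‖ := by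
  have hγ0 : 0 < γ := lt_of_le_of_lt (le_trans hg.le hgρ) hργ
  have hns : Complex.normSq z = 1 := by rw [Complex.normSq_eq_norm_sq, hz]; norm_num
  have hx : z.re ^ 2 + z.im ^ 2 = 1 := by
    have h := hns
    rw [Complex.normSq_apply] at h
    nlinarith [h]
  have hxle : z.re ≤ 1 := by nlinarith [sq_nonneg z.im, sq_nonneg (z.re - 1)]
  have hA : ‖(γ : ℂ) * z - (g : ℂ) ^ 2‖ ^ 2
      = (γ * z.re - g ^ 2) ^ 2 + (γ * z.im) ^ 2 := by
    rw [Complex.sq_norm, Complex.normSq_apply]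
    simp [← Complex.ofReal_pow, Complex.mul_re, Complex.mul_im, Complex.sub_re,
      Complex.sub_im]
    ring
  have hB : ‖(γ : ℂ) * z - 1‖ ^ 2
      = (γ * z.re - 1) ^ 2 + (γ * z.im) ^ 2 := by
    rw [Complex.sq_norm, Complex.normSq_apply]
    simp [Complex.mul_re, Complex.mul_im, Complex.sub_re, Complex.sub_im]
    ring
  have hg2 : g ^ 2 < γ := by nlinarith
  have hfac : 0 < γ * (γ - g ^ 2) - ρ * g * (1 - γ) := by
    nlinarith [mul_pos (mul_pos hγ0 (by linarith : (0:ℝ) < 1 + g)) (by linarith : (0:ℝ) < γ - g),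
      mul_nonneg (mul_nonneg hg.le (by linarith : (0:ℝ) ≤ 1 - γ)) (by linarith : (0:ℝ) ≤ γ - ρ)]
  have hsum : 0 < γ * (γ - g ^ 2) + ρ * g * (1 - γ) := by
    nlinarith [mul_pos hγ0 (by linarith : (0:ℝ) < γ - g ^ 2),
      mul_nonneg (mul_nonneg (by linarith : (0:ℝ) ≤ ρ) hg.le) (by linarith : (0:ℝ) ≤ 1 - γ)]
  have key : (ρ * g * ‖(γ : ℂ) * z - 1‖) ^ 2
      < (γ * ‖(γ : ℂ) * z - (g : ℂ) ^ 2‖) ^ 2 := by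
    rw [mul_pow, mul_pow, mul_pow, hA, hB]
    have hid : γ ^ 2 * ((γ * z.re - g ^ 2) ^ 2 + (γ * z.im) ^ 2)
        - ρ ^ 2 * g ^ 2 * ((γ * z.re - 1) ^ 2 + (γ * z.im) ^ 2)
        = (γ * (γ - g ^ 2) - ρ * g * (1 - γ)) * (γ * (γ - g ^ 2) + ρ * g * (1 - γ))
          + 2 * γ * g ^ 2 * (γ ^ 2 - ρ ^ 2) * (1 - z.re)
          + γ ^ 2 * (γ ^ 2 - ρ ^ 2 * g ^ 2) * (z.re ^ 2 + z.im ^ 2 - 1) := by ring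
    have h1 : 0 < (γ * (γ - g ^ 2) - ρ * g * (1 - γ)) * (γ * (γ - g ^ 2) + ρ * g * (1 - γ)) :=
      mul_pos hfac hsum
    have h2 : 0 ≤ 2 * γ * g ^ 2 * (γ ^ 2 - ρ ^ 2) * (1 - z.re) := by
      have : (0:ℝ) ≤ γ ^ 2 - ρ ^ 2 := by nlinarith
      have : (0:ℝ) ≤ 1 - z.re := by linarith
      positivity
    have h3 : z.re ^ 2 + z.im ^ 2 - 1 = 0 := by linarith
    rw [h3] at hid
    nlinarith [hid, h1, h2]
  have hnn : 0 ≤ γ * ‖(γ : ℂ) * z - (g : ℂ) ^ 2‖ := by positivity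
  exact lt_of_pow_lt_pow_left₀ 2 hnn key
end

section
/- Let g, ρ, γ be real numbers with 0 < g ≤ ρ < γ ≤ 1, and let z be a complex number with |z| = 1. Set w = γz, N(w) = w(w − g²) + ρg(w − 1) and D(w) = w(w − g²) − ρg(w − 1). Then D(w) ≠ 0 and the real part of N(w)/D(w) is strictly positive. -/
theorem transfer_function_strictly_positive_real (g ρ γ : ℝ) (hg : 0 < g) (hgρ : g ≤ ρ)
    (hργ : ρ < γ) (hγ : γ ≤ 1) (z : ℂ) (hz : ‖z‖ = 1) :
    let w : ℂ := (γ : ℂ) * z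
    let N : ℂ := w * (w - (g : ℂ) ^ 2) + (ρ : ℂ) * (g : ℂ) * (w - 1)
    let D : ℂ := w * (w - (g : ℂ) ^ 2) - (ρ : ℂ) * (g : ℂ) * (w - 1)
    D ≠ 0 ∧ 0 < (N / D).re := by
  intro w N D
  set a := z.re with ha'
  set b := z.im with hb'
  have hab : a ^ 2 + b ^ 2 = 1 := by
    have := Complex.normSq_apply z
    have h1 : Complex.normSq z = 1 := by
      rw [← Complex.sq_norm, hz]; norm_num
    nlinarith [this, h1]
  have ha1 : a ≤ 1 := by
    have h := Complex.abs_re_le_norm z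
    rw [hz] at h
    exact le_trans (le_abs_self _) h
  have hgγ : g < γ := lt_of_le_of_lt hgρ hργ
  have hg1 : g < 1 := lt_of_lt_of_le hgγ hγ
  -- the key real inequality
  have hkey : 0 < γ^2*(γ^2 - 2*g^2*γ*a + g^4) - ρ^2*g^2*(γ^2 - 2*γ*a + 1) := by
    nlinarith [mul_nonneg (mul_nonneg (mul_nonneg (sub_nonneg.2 ha1) (sq_nonneg g)) (le_of_lt (lt_trans hg hgγ)))
        (mul_nonneg (le_of_lt (sub_pos.2 hργ)) (by nlinarith : (0:ℝ) ≤ γ + ρ)),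
      mul_pos (show (0:ℝ) < γ*(γ-g^2) - ρ*g*(1-γ) by
          nlinarith [mul_pos (mul_pos (lt_trans hg hgγ) (sub_pos.2 hgγ)) (by linarith : (0:ℝ) < 1 + g),
            mul_nonneg (mul_nonneg (le_of_lt (sub_pos.2 hργ)) hg.le) (by linarith : (0:ℝ) ≤ 1 - γ)])
        (show (0:ℝ) < γ*(γ-g^2) + ρ*g*(1-γ) by
          nlinarith [mul_pos (mul_pos (lt_trans hg hgγ) (sub_pos.2 hgγ)) (by linarith : (0:ℝ) < 1 + g),
            mul_nonneg (mul_nonneg (by linarith : (0:ℝ) ≤ ρ) hg.le) (by linarith : (0:ℝ) ≤ 1 - γ)])]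
  -- express Re(N * conj D)
  have hre : N.re * D.re + N.im * D.im
      = γ^2*(γ^2 - 2*g^2*γ*a + g^4) - ρ^2*g^2*(γ^2 - 2*γ*a + 1) := by
    simp only [N, D, w, Complex.add_re, Complex.add_im, Complex.sub_re, Complex.sub_im,
      Complex.mul_re, Complex.mul_im, Complex.ofReal_re, Complex.ofReal_im, Complex.one_re,
      Complex.one_im, Complex.sq_norm, pow_two, ← ha', ← hb']
    linear_combination (γ^2*(γ^2*(a^2+b^2) + γ^2 - 2*g^2*γ*a + g^4 - ρ^2*g^2)) * hab
  have hD : D ≠ 0 := by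
    intro h
    rw [h] at hre
    simp at hre
    linarith [hkey, hre.symm ▸ (le_refl (0:ℝ))]
  refine ⟨hD, ?_⟩
  have hDsq : 0 < Complex.normSq D := Complex.normSq_pos.2 hD
  rw [Complex.div_re]
  have : N.re * D.re / Complex.normSq D + N.im * D.im / Complex.normSq D
      = (N.re * D.re + N.im * D.im) / Complex.normSq D := by ring
  rw [this, hre]
  exact div_pos hkey hDsq
end

section
/- Let g, ρ be real numbers with 0 < g ≤ ρ < 1. Then every complex root z of the quadratic z² − g(g + ρ) z + ρg = 0 satisfies |z| ≤ ρ. Consequently, for every γ ∈ (ρ, 1], all poles of the rational function z ↦ (γz(γz − g²) + ρg(γz − 1)) / (γz(γz − g²) − ρg(γz − 1)) lie strictly inside the open unit disk, i.e., the transfer function is stable. -/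
set_option maxHeartbeats 1000000


theorem denominator_roots_and_stability (g ρ : ℝ) (hg : 0 < g) (hgρ : g ≤ ρ) (hρ : ρ < 1) :
    (∀ z : ℂ, z ^ 2 - (g : ℂ) * ((g : ℂ) + (ρ : ℂ)) * z + (ρ : ℂ) * (g : ℂ) = 0 →
      ‖z‖ ≤ ρ) ∧
    ∀ γ ∈ Set.Ioc ρ 1, ∀ z : ℂ, 1 ≤ ‖z‖ →
      (γ : ℂ) * z * ((γ : ℂ) * z - (g : ℂ) ^ 2) - (ρ : ℂ) * (g : ℂ) * ((γ : ℂ) * z - 1) ≠ 0 := by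
  have hρ0 : 0 < ρ := lt_of_lt_of_le hg hgρ
  have hg1 : g < 1 := lt_of_le_of_lt hgρ hρ
  set b : ℝ := g * (g + ρ) with hb
  set c : ℝ := ρ * g with hc
  have hb0 : 0 < b := by positivity
  have hc0 : 0 < c := mul_pos hρ0 hg
  have hcρ : c ≤ ρ ^ 2 := by nlinarith
  have main : ∀ z : ℂ, z ^ 2 - (g : ℂ) * ((g : ℂ) + (ρ : ℂ)) * z + (ρ : ℂ) * (g : ℂ) = 0 →
      ‖z‖ ≤ ρ := by
    intro z hz
    have key : (2 * z - (b : ℂ)) ^ 2 = ((b ^ 2 - 4 * c : ℝ) : ℂ) := by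
      push_cast [hb, hc]
      linear_combination 4 * hz
    by_cases hD : 0 ≤ b ^ 2 - 4 * c
    · set s := Real.sqrt (b ^ 2 - 4 * c) with hs
      have hs0 : 0 ≤ s := Real.sqrt_nonneg _
      have hs2 : s ^ 2 = b ^ 2 - 4 * c := Real.sq_sqrt hD
      have hsb : s ≤ b := by nlinarith
      have h2ρb : 0 ≤ 2 * ρ - b := by nlinarith [mul_nonneg hρ0.le (by linarith : (0:ℝ) ≤ 1 - g)]
      have hsq : s ^ 2 ≤ (2 * ρ - b) ^ 2 := by nlinarith [mul_nonneg hρ0.le (by linarith : (0:ℝ) ≤ 1 - g), mul_nonneg hρ0.le (by nlinarith : (0:ℝ) ≤ ρ - g^2)]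
      have hs2ρ : s ≤ 2 * ρ - b := by nlinarith
      have hfac : (2 * z - (b : ℂ) - s) * (2 * z - (b : ℂ) + s) = 0 := by
        have hs2' : ((s : ℂ)) ^ 2 = ((b ^ 2 - 4 * c : ℝ) : ℂ) := by
          rw [← Complex.ofReal_pow, hs2]
        linear_combination key - hs2'
      rcases mul_eq_zero.mp hfac with h | h
      · have hzv : z = (((b + s) / 2 : ℝ) : ℂ) := by
          push_cast
          linear_combination h / 2
        rw [hzv, Complex.norm_real, Real.norm_eq_abs, abs_of_nonneg (by linarith)]
        linarith
      · have hzv : z = (((b - s) / 2 : ℝ) : ℂ) := by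
          push_cast
          linear_combination h / 2
        rw [hzv, Complex.norm_real, Real.norm_eq_abs, abs_of_nonneg (by linarith)]
        linarith
    · push_neg at hD
      set t := Real.sqrt (4 * c - b ^ 2) with ht
      have ht0 : 0 ≤ t := Real.sqrt_nonneg _
      have ht2 : t ^ 2 = 4 * c - b ^ 2 := Real.sq_sqrt (by linarith)
      have hfac : (2 * z - (b : ℂ) - t * Complex.I) * (2 * z - (b : ℂ) + t * Complex.I) = 0 := by
        have ht2' : ((t : ℂ)) ^ 2 = ((4 * c - b ^ 2 : ℝ) : ℂ) := by
          rw [← Complex.ofReal_pow, ht2]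
        have hI : Complex.I ^ 2 = -1 := Complex.I_sq
        have key' := key
        push_cast at ht2' key' ⊢
        linear_combination key' - ((t:ℝ):ℂ) ^ 2 * hI + ht2'
      have habs2 : (‖z‖) ^ 2 = c := by
        rcases mul_eq_zero.mp hfac with h | h
        · have hzv : 2 * z = (b : ℂ) + t * Complex.I := by linear_combination h
          have hn : Complex.normSq (2 * z) = 4 * c := by
            rw [hzv]
            have : Complex.normSq ((b : ℂ) + (t : ℂ) * Complex.I) = b * b + t * t := by
              simp [Complex.normSq_apply]
            rw [this]; nlinarith
          have h4 : Complex.normSq (2 * z) = 4 * Complex.normSq z := by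
            rw [map_mul]; norm_num [Complex.normSq_apply]
          rw [Complex.sq_norm]; nlinarith
        · have hzv : 2 * z = (b : ℂ) - t * Complex.I := by linear_combination h
          have hn : Complex.normSq (2 * z) = 4 * c := by
            rw [hzv]
            have : Complex.normSq ((b : ℂ) - (t : ℂ) * Complex.I) = b * b + t * t := by
              simp [Complex.normSq_apply]
            rw [this]; nlinarith
          have h4 : Complex.normSq (2 * z) = 4 * Complex.normSq z := by
            rw [map_mul]; norm_num [Complex.normSq_apply]
          rw [Complex.sq_norm]; nlinarith
      nlinarith [norm_nonneg z]
  refine ⟨main, ?_⟩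
  rintro γ ⟨hγ1, hγ2⟩ z hz1 heq
  have hw : ((γ : ℂ) * z) ^ 2 - (g : ℂ) * ((g : ℂ) + (ρ : ℂ)) * ((γ : ℂ) * z)
      + (ρ : ℂ) * (g : ℂ) = 0 := by linear_combination heq
  have h1 := main _ hw
  have h2 : ‖(γ : ℂ) * z‖ = γ * ‖z‖ := by
    rw [norm_mul, Complex.norm_real, Real.norm_eq_abs, abs_of_pos (by linarith)]
  rw [h2] at h1
  have hγ0 : 0 < γ := by linarith
  nlinarith
end

section
/- Let a ∈ ℝ with |a| ≤ 1 and G ∈ ℝ with 0 ≤ G ≤ 1. Then every complex root z of the quadratic z² − G(1 + a) z + G a = 0 satisfies |z| ≤ max(√G, |a|). -/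
theorem characteristic_roots_bound (a G : ℝ) (ha : |a| ≤ 1) (hG0 : 0 ≤ G) (hG1 : G ≤ 1) :
    ∀ z : ℂ, z ^ 2 - (G : ℂ) * (1 + (a : ℂ)) * z + (G : ℂ) * (a : ℂ) = 0 →
      ‖z‖ ≤ max (Real.sqrt G) |a| := by
  intro z hz
  by_contra hcon
  push_neg at hcon
  set r := ‖z‖ with hr
  have hsG : Real.sqrt G < r := lt_of_le_of_lt (le_max_left _ _) hcon
  have har : |a| < r := lt_of_le_of_lt (le_max_right _ _) hcon
  have hrpos : 0 < r := lt_of_le_of_lt (Real.sqrt_nonneg G) hsG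
  have hs0 : 0 ≤ Real.sqrt G := Real.sqrt_nonneg G
  have hs2 : Real.sqrt G ^ 2 = G := Real.sq_sqrt hG0
  rcases eq_or_lt_of_le hG0 with hG | hGpos
  · -- G = 0
    have hz0 : z ^ 2 = 0 := by
      rw [← hG] at hz; simpa using hz
    have : z = 0 := by
      simpa using pow_eq_zero_iff (n := 2) (by norm_num) |>.mp hz0
    rw [hr, this] at hrpos
    simp at hrpos
  have key : z * (z - (G : ℂ)) = (G : ℂ) * (a : ℂ) * (z - 1) := by
    linear_combination hz
  by_cases hz1 : z = 1
  · subst hz1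
    have : (G : ℂ) = 1 := by
      have : (1 : ℂ) - (G : ℂ) = 0 := by linear_combination key
      linear_combination -this
    have hG1' : G = 1 := by exact_mod_cast this
    rw [hG1'] at hsG
    simp [hr, Real.sqrt_one] at hsG
  · have hB : 0 < ‖z - 1‖ := by
      simpa using (norm_pos_iff.mpr (sub_ne_zero.mpr hz1))
    have habs : r * ‖z - (G : ℂ)‖ = G * |a| * ‖z - 1‖ := by
      have := congrArg (‖·‖) key
      simpa [norm_mul, Complex.norm_real, Real.norm_eq_abs, abs_of_nonneg hG0] using this
    have hlt : ‖z - (G : ℂ)‖ < G * ‖z - 1‖ := by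
      have h1 : r * ‖z - (G : ℂ)‖ < r * (G * ‖z - 1‖) := by
        rw [habs]
        have : G * |a| * ‖z - 1‖ < G * r * ‖z - 1‖ := by
          apply mul_lt_mul_of_pos_right _ hB
          exact mul_lt_mul_of_pos_left har hGpos
        linarith [this]
      exact lt_of_mul_lt_mul_left h1 (le_of_lt hrpos)
    have h2 : Complex.normSq (z - (G : ℂ)) < G ^ 2 * Complex.normSq (z - 1) := by
      have e1 := Complex.sq_norm (z - (G : ℂ))
      have e2 := Complex.sq_norm (z - 1)
      nlinarith [norm_nonneg (z - (G : ℂ)),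
        norm_nonneg (z - 1), mul_pos hGpos hB]
    have hx : z.re ≤ r := Complex.re_le_norm z
    have hr2 : r ^ 2 = z.re ^ 2 + z.im ^ 2 := by
      rw [hr, Complex.sq_norm, Complex.normSq_apply]; ring
    simp only [Complex.normSq_apply, Complex.sub_re, Complex.sub_im, Complex.ofReal_re,
      Complex.ofReal_im, Complex.one_re, Complex.one_im] at h2
    have h1G : 0 ≤ 1 - G := by linarith
    have hA : (1 - G) * ((1 + G) * r ^ 2) < (1 - G) * (2 * G * z.re) := by
      nlinarith [h2]
    have hB : (1 - G) * (2 * G * z.re) ≤ (1 - G) * (2 * G * r) := by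
      nlinarith [mul_nonneg h1G hG0, hx]
    have hC : 2 * G < (1 + G) * r := by
      nlinarith [mul_nonneg hs0 (sq_nonneg (1 - Real.sqrt G)), sub_pos.mpr hsG, hs2,
        mul_pos (sub_pos.mpr hsG) (by positivity : (0:ℝ) < 1 + Real.sqrt G ^ 2)]
    have hD : 0 ≤ (1 - G) * (r * ((1 + G) * r - 2 * G)) :=
      mul_nonneg h1G (le_of_lt (mul_pos hrpos (by linarith)))
    nlinarith [hA, hB, hD]
end
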